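/- arXiv:2511.23310 — 3 statements merged into one kernel-verified Lean document; each statement's English description precedes it below -/
import Mathlib

section
/- (Bound under the optimal learning-rate schedule) Set a_t := E‖∇f(θ_t)‖² and assume a_t + v_t > 0 for all t. If the learning rates are chosen as η_t = a_t / (L' (a_t + v_t)), then for the loss 𝓛(θ) := f(θ*) − f(θ), E[𝓛(θ_T)] ≤ E[𝓛(θ_0)] − Σ_{t=0}^{T−1} a_t² / (2 L' (a_t + v_t)). -/
open MeasureTheory InnerProductSpace

lemma sgd_descent_aux {E : Type*} [NormedAddCommGroup E] [InnerProductSpace ℝ E]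
    [CompleteSpace E]
    (f : E → ℝ) (f' : E → E) (L : ℝ) (hL : 0 ≤ L)
    (hdiff : ∀ x, HasGradientAt f (f' x) x)
    (hlip : ∀ x y, ‖f' x - f' y‖ ≤ L * ‖x - y‖)
    (x u : E) :
    |f (x + u) - f x - (inner ℝ (f' x) u : ℝ)| ≤ L / 2 * ‖u‖ ^ 2 := by
  have hcontf' : Continuous f' := by
    have : LipschitzWith ⟨L, hL⟩ f' := LipschitzWith.of_dist_le_mul (by
      intro a b; simp only [dist_eq_norm]; exact hlip a b)
    exact this.continuous
  have hφ : ∀ s : ℝ, HasDerivAt (fun s : ℝ => f (x + s • u))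
      (inner ℝ (f' (x + s • u)) u : ℝ) s := by
    intro s
    have h1 : HasDerivAt (fun s : ℝ => x + s • u) u s := by
      simpa using ((hasDerivAt_id s).smul_const u).const_add x
    have h2 := (hdiff (x + s • u)).hasFDerivAt
    have := h2.comp_hasDerivAt s h1
    simpa [toDual_apply_apply, Function.comp_def] using this
  have hc : Continuous fun s : ℝ => (inner ℝ (f' (x + s • u)) u : ℝ) := by
    exact (hcontf'.comp (continuous_const.add (continuous_id.smul continuous_const))).inner
      continuous_const
  have hFTC : ∫ s in (0:ℝ)..1, (inner ℝ (f' (x + s • u)) u : ℝ) = f (x + u) - f x := by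
    have := intervalIntegral.integral_eq_sub_of_hasDerivAt (f := fun s : ℝ => f (x + s • u))
      (f' := fun s : ℝ => (inner ℝ (f' (x + s • u)) u : ℝ))
      (fun s _ => hφ s) (hc.intervalIntegrable 0 1)
    simpa using this
  have key : f (x + u) - f x - (inner ℝ (f' x) u : ℝ)
      = ∫ s in (0:ℝ)..1, (inner ℝ (f' (x + s • u) - f' x) u : ℝ) := by
    simp_rw [inner_sub_left]
    rw [intervalIntegral.integral_sub (hc.intervalIntegrable 0 1)
      (intervalIntegrable_const), hFTC]
    simp
  rw [key, ← Real.norm_eq_abs]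
  have hb : ∀ s ∈ Set.uIoc (0:ℝ) 1, ‖(inner ℝ (f' (x + s • u) - f' x) u : ℝ)‖
      ≤ L * ‖u‖ ^ 2 * s := by
    intro s hs
    rw [Set.uIoc_of_le zero_le_one] at hs
    calc ‖(inner ℝ (f' (x + s • u) - f' x) u : ℝ)‖
        ≤ ‖f' (x + s • u) - f' x‖ * ‖u‖ := norm_inner_le_norm _ _
      _ ≤ (L * ‖x + s • u - x‖) * ‖u‖ :=
          mul_le_mul_of_nonneg_right (hlip _ _) (norm_nonneg _)
      _ = L * ‖u‖ ^ 2 * s := by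
          rw [add_sub_cancel_left, norm_smul, Real.norm_eq_abs,
            abs_of_nonneg hs.1.le]
          ring
  have hval : ∫ s in (0:ℝ)..1, L * ‖u‖ ^ 2 * s = L / 2 * ‖u‖ ^ 2 := by
    rw [intervalIntegral.integral_const_mul, integral_id]
    ring
  calc ‖∫ s in (0:ℝ)..1, (inner ℝ (f' (x + s • u) - f' x) u : ℝ)‖
      ≤ |∫ s in (0:ℝ)..1, L * ‖u‖ ^ 2 * s| := by
        apply intervalIntegral.norm_integral_le_abs_of_norm_le _
          ((continuous_const.mul continuous_id).intervalIntegrable 0 1)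
        exact (ae_restrict_iff' measurableSet_uIoc).2 (Filter.Eventually.of_forall hb)
    _ = L / 2 * ‖u‖ ^ 2 := by
        rw [hval]; exact abs_of_nonneg (by positivity)

open MeasureTheory

lemma sgd_coord_abs_le_norm {d : ℕ} (x : EuclideanSpace ℝ (Fin d)) (i : Fin d) :
    |x i| ≤ ‖x‖ := by
  rw [EuclideanSpace.norm_eq]
  rw [Real.le_sqrt (abs_nonneg _) (by positivity)]
  have : |x i| ^ 2 = ‖x i‖ ^ 2 := by rw [Real.norm_eq_abs]
  rw [this]
  exact Finset.single_le_sum (f := fun j => ‖x j‖ ^ 2)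
    (fun j _ => by positivity) (Finset.mem_univ i)

lemma sgd_inner_integral_zero {d : ℕ} {Ω : Type*} {m : MeasurableSpace Ω}
    {m0 : MeasurableSpace Ω} (hm : m ≤ m0)
    {P : Measure Ω} [IsProbabilityMeasure P]
    {g ξ : Ω → EuclideanSpace ℝ (Fin d)}
    (hgm : StronglyMeasurable[m] g) (hgL2 : MemLp g 2 P) (hξL2 : MemLp ξ 2 P)
    (hmean : P[ξ|m] =ᵐ[P] 0) :
    ∫ ω, (inner ℝ (g ω) (ξ ω) : ℝ) ∂P = 0 := by
  have hξint : Integrable ξ P := hξL2.integrable one_le_two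
  have hgsq : Integrable (fun ω => ‖g ω‖ ^ 2) P :=
    (memLp_two_iff_integrable_sq_norm hgL2.aestronglyMeasurable).1 hgL2
  have hξsq : Integrable (fun ω => ‖ξ ω‖ ^ 2) P :=
    (memLp_two_iff_integrable_sq_norm hξL2.aestronglyMeasurable).1 hξL2
  have hbound : Integrable (fun ω => (1/2) * (‖g ω‖ ^ 2 + ‖ξ ω‖ ^ 2)) P :=
    (hgsq.add hξsq).const_mul _
  -- coordinate conditional expectations vanish
  have hξiint : ∀ i : Fin d, Integrable (fun ω => ξ ω i) P := by
    intro i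
    have := (EuclideanSpace.proj i (𝕜 := ℝ)).integrable_comp hξint
    simpa [PiLp.proj_apply] using this
  have hcond : ∀ i : Fin d, P[fun ω => ξ ω i|m] =ᵐ[P] 0 := by
    intro i
    refine (ae_eq_condExp_of_forall_setIntegral_eq hm (hξiint i)
      (fun s _ _ => integrableOn_zero) (fun s hs hμs => ?_)
      ⟨0, stronglyMeasurable_const, Filter.EventuallyEq.rfl⟩).symm
    have h1 : ∫ ω in s, ξ ω ∂P = 0 := by
      rw [← setIntegral_condExp hm hξint hs]
      calc ∫ ω in s, (P[ξ|m]) ω ∂P = ∫ ω in s, (0 : EuclideanSpace ℝ (Fin d)) ∂P :=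
            integral_congr_ae (ae_restrict_of_ae hmean)
        _ = 0 := by simp
    have h2 : ∫ ω in s, ξ ω i ∂P = 0 := by
      have := ((EuclideanSpace.proj i (𝕜 := ℝ)).integral_comp_comm (hξint.integrableOn (s := s)))
      simp only [PiLp.proj_apply] at this
      rw [this, h1]
      simp
    rw [h2]
    simp
  -- each coordinate product integrates to zero
  have hprodint : ∀ i : Fin d, Integrable (fun ω => g ω i * ξ ω i) P := by
    intro i
    refine Integrable.mono' hbound ?_ (Filter.Eventually.of_forall fun ω => ?_)
    · exact (((EuclideanSpace.proj i (𝕜 := ℝ)).continuous.comp_stronglyMeasurable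
        (hgm.mono hm)).aestronglyMeasurable.mul
        ((EuclideanSpace.proj i (𝕜 := ℝ)).continuous.comp_aestronglyMeasurable
          hξL2.aestronglyMeasurable))
    · have h1 : |g ω i| ≤ ‖g ω‖ := sgd_coord_abs_le_norm _ i
      have h2 : |ξ ω i| ≤ ‖ξ ω‖ := sgd_coord_abs_le_norm _ i
      have h3 : ‖g ω i * ξ ω i‖ ≤ ‖g ω‖ * ‖ξ ω‖ := by
        rw [norm_mul, Real.norm_eq_abs, Real.norm_eq_abs]
        exact mul_le_mul h1 h2 (abs_nonneg _) (norm_nonneg _)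
      refine h3.trans ?_
      nlinarith [sq_nonneg (‖g ω‖ - ‖ξ ω‖), norm_nonneg (g ω), norm_nonneg (ξ ω)]
  have hzero : ∀ i : Fin d, ∫ ω, g ω i * ξ ω i ∂P = 0 := by
    intro i
    rw [← integral_condExp hm (f := fun ω => g ω i * ξ ω i)]
    have hgi : StronglyMeasurable[m] (fun ω => g ω i) :=
      (EuclideanSpace.proj i (𝕜 := ℝ)).continuous.comp_stronglyMeasurable hgm
    have heq : P[fun ω => g ω i * ξ ω i|m] =ᵐ[P] fun ω => g ω i * (P[fun ω => ξ ω i|m]) ω := by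
      have := condExp_mul_of_stronglyMeasurable_left hgi (hprodint i) (hξiint i)
      exact this
    have heq2 : P[fun ω => g ω i * ξ ω i|m] =ᵐ[P] 0 := by
      filter_upwards [heq, hcond i] with ω h1 h2
      simp [h1, h2]
    rw [integral_congr_ae heq2]
    simp
  have hinner : ∀ ω, (inner ℝ (g ω) (ξ ω) : ℝ) = ∑ i : Fin d, g ω i * ξ ω i := by
    intro ω
    simp [PiLp.inner_apply, RCLike.inner_apply, conj_trivial, mul_comm]
  simp_rw [hinner]
  rw [integral_finset_sum _ (fun i _ => hprodint i)]
  exact Finset.sum_eq_zero fun i _ => hzero i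

open MeasureTheory



open MeasureTheory

/-- (Bound under the optimal learning-rate schedule.) In the
stochastic gradient ascent setting with `a_t = E‖∇f(θ_t)‖²`, `a_t + v_t > 0`,
and learning rates `η_t = a_t / (L'(a_t + v_t))`, the loss
`𝓛(θ) = f(θ*) − f(θ)` satisfies
`E[𝓛(θ_T)] ≤ E[𝓛(θ_0)] − Σ_t a_t² / (2L'(a_t + v_t))`. -/
theorem sgd_loss_bound_optimal_lr
    {d : ℕ} (hd : 1 ≤ d)
    {Ω : Type*} {m0 : MeasurableSpace Ω} (P : Measure Ω) [IsProbabilityMeasure P]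
    (ℱ : Filtration ℕ m0)
    (f : EuclideanSpace ℝ (Fin d) → ℝ)
    (f' : EuclideanSpace ℝ (Fin d) → EuclideanSpace ℝ (Fin d))
    (L' : ℝ) (hL' : 0 < L')
    (hdiff : ∀ x, HasGradientAt f (f' x) x)
    (hlip : ∀ x y, ‖f' x - f' y‖ ≤ L' * ‖x - y‖)
    (θstar : EuclideanSpace ℝ (Fin d)) (hmax : ∀ x, f x ≤ f θstar)
    (T : ℕ) (η v : ℕ → ℝ) (hv : ∀ t < T, 0 ≤ v t)
    (θ : ℕ → Ω → EuclideanSpace ℝ (Fin d))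
    (ξ : ℕ → Ω → EuclideanSpace ℝ (Fin d))
    (hθmeas : ∀ t, StronglyMeasurable[ℱ t] (θ t))
    (hθ0int : Integrable (fun ω => f θstar - f (θ 0 ω)) P)
    (hrec : ∀ t < T, ∀ ω, θ (t + 1) ω = θ t ω + η t • (f' (θ t ω) + ξ t ω))
    (hξmeas : ∀ t < T, StronglyMeasurable[ℱ (t + 1)] (ξ t))
    (hξL2 : ∀ t < T, MemLp (ξ t) 2 P)
    (hξmean : ∀ t < T, P[fun ω => ξ t ω|ℱ t] =ᵐ[P] 0)
    (hξvar : ∀ t < T, ∀ᵐ ω ∂P, (P[fun ω => ‖ξ t ω‖ ^ 2|ℱ t]) ω ≤ v t)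
    (hgradint : ∀ t, Integrable (fun ω => ‖f' (θ t ω)‖ ^ 2) P)
    (a : ℕ → ℝ) (ha : ∀ t, a t = ∫ ω, ‖f' (θ t ω)‖ ^ 2 ∂P)
    (hav : ∀ t < T, 0 < a t + v t)
    (hηdef : ∀ t < T, η t = a t / (L' * (a t + v t))) :
    ∫ ω, (f θstar - f (θ T ω)) ∂P
      ≤ ∫ ω, (f θstar - f (θ 0 ω)) ∂P
        - ∑ t ∈ Finset.range T, a t ^ 2 / (2 * L' * (a t + v t)) := by
  have hdf : Differentiable ℝ f := fun x => (hdiff x).hasFDerivAt.differentiableAt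
  have hcontf : Continuous f := hdf.continuous
  have hcontf' : Continuous f' := by
    have : LipschitzWith ⟨L', hL'.le⟩ f' := LipschitzWith.of_dist_le_mul (by
      intro p q; simp only [dist_eq_norm]; exact hlip p q)
    exact this.continuous
  have step : ∀ t, t < T → Integrable (fun ω => f θstar - f (θ t ω)) P →
      Integrable (fun ω => f θstar - f (θ (t+1) ω)) P ∧
      ∫ ω, (f θstar - f (θ (t+1) ω)) ∂P
        ≤ ∫ ω, (f θstar - f (θ t ω)) ∂P - a t ^ 2 / (2 * L' * (a t + v t)) := by
    intro t ht hLint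
    have hgSMt : StronglyMeasurable[ℱ t] (fun ω => f' (θ t ω)) :=
      hcontf'.comp_stronglyMeasurable (hθmeas t)
    have hgSM : AEStronglyMeasurable (fun ω => f' (θ t ω)) P :=
      (hgSMt.mono (ℱ.le t)).aestronglyMeasurable
    have hgMem : MemLp (fun ω => f' (θ t ω)) 2 P :=
      (memLp_two_iff_integrable_sq_norm hgSM).2 (hgradint t)
    have hξMem := hξL2 t ht
    have hξsq : Integrable (fun ω => ‖ξ t ω‖ ^ 2) P :=
      (memLp_two_iff_integrable_sq_norm hξMem.aestronglyMeasurable).1 hξMem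
    have hinner0 : ∫ ω, (inner ℝ (f' (θ t ω)) (ξ t ω) : ℝ) ∂P = 0 :=
      sgd_inner_integral_zero (ℱ.le t) hgSMt hgMem hξMem (hξmean t ht)
    have hbd : Integrable (fun ω => (1:ℝ)/2 * (‖f' (θ t ω)‖ ^ 2 + ‖ξ t ω‖ ^ 2)) P :=
      ((hgradint t).add hξsq).const_mul _
    have hinnerInt : Integrable (fun ω => (inner ℝ (f' (θ t ω)) (ξ t ω) : ℝ)) P := by
      refine Integrable.mono' hbd
        (hgSM.inner hξMem.aestronglyMeasurable)
        (Filter.Eventually.of_forall fun ω => ?_)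
      have h1 : ‖(inner ℝ (f' (θ t ω)) (ξ t ω) : ℝ)‖ ≤ ‖f' (θ t ω)‖ * ‖ξ t ω‖ :=
        norm_inner_le_norm _ _
      refine h1.trans ?_
      nlinarith [sq_nonneg (‖f' (θ t ω)‖ - ‖ξ t ω‖)]
    have hsumsq : Integrable (fun ω => ‖f' (θ t ω) + ξ t ω‖ ^ 2) P :=
      (memLp_two_iff_integrable_sq_norm (hgMem.add hξMem).aestronglyMeasurable).1
        (hgMem.add hξMem)
    have hEξsq : ∫ ω, ‖ξ t ω‖ ^ 2 ∂P ≤ v t := by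
      rw [← integral_condExp (ℱ.le t) (f := fun ω => ‖ξ t ω‖ ^ 2)]
      calc ∫ ω, (P[fun ω => ‖ξ t ω‖ ^ 2|ℱ t]) ω ∂P ≤ ∫ _ω, v t ∂P :=
            integral_mono_ae integrable_condExp (integrable_const _) (hξvar t ht)
        _ = v t := by simp
    have hEsumsq : ∫ ω, ‖f' (θ t ω) + ξ t ω‖ ^ 2 ∂P ≤ a t + v t := by
      have hptw : (fun ω => ‖f' (θ t ω) + ξ t ω‖ ^ 2)
          = fun ω => ‖f' (θ t ω)‖ ^ 2 + 2 * (inner ℝ (f' (θ t ω)) (ξ t ω) : ℝ)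
              + ‖ξ t ω‖ ^ 2 := by
        funext ω; exact norm_add_sq_real _ _
      have hB : Integrable (fun ω => 2 * (inner ℝ (f' (θ t ω)) (ξ t ω) : ℝ)) P :=
        hinnerInt.const_mul 2
      have hA : Integrable
          (fun ω => ‖f' (θ t ω)‖ ^ 2 + 2 * (inner ℝ (f' (θ t ω)) (ξ t ω) : ℝ)) P :=
        (hgradint t).add hB
      rw [hptw, integral_add hA hξsq, integral_add (hgradint t) hB, integral_const_mul,
        hinner0, ← ha t]
      have := hEξsq
      linarith
    -- the gain term
    set φ : Ω → ℝ := fun ω => η t * ‖f' (θ t ω)‖ ^ 2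
        + η t * (inner ℝ (f' (θ t ω)) (ξ t ω) : ℝ)
        - L' / 2 * η t ^ 2 * ‖f' (θ t ω) + ξ t ω‖ ^ 2 with hφdef
    have hT1 : Integrable (fun ω => η t * ‖f' (θ t ω)‖ ^ 2) P := (hgradint t).const_mul _
    have hT2 : Integrable (fun ω => η t * (inner ℝ (f' (θ t ω)) (ξ t ω) : ℝ)) P :=
      hinnerInt.const_mul _
    have hT3 : Integrable (fun ω => L' / 2 * η t ^ 2 * ‖f' (θ t ω) + ξ t ω‖ ^ 2) P :=
      hsumsq.const_mul _
    have hT12 : Integrable (fun ω => η t * ‖f' (θ t ω)‖ ^ 2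
        + η t * (inner ℝ (f' (θ t ω)) (ξ t ω) : ℝ)) P := hT1.add hT2
    have hφint : Integrable φ P := hT12.sub hT3
    have hdesc : ∀ ω, f θstar - f (θ (t+1) ω) ≤ (f θstar - f (θ t ω)) - φ ω := by
      intro ω
      have habs := sgd_descent_aux f f' L' hL'.le hdiff hlip (θ t ω)
        (η t • (f' (θ t ω) + ξ t ω))
      have h1 := (abs_le.1 habs).1
      have h2 : (inner ℝ (f' (θ t ω)) (η t • (f' (θ t ω) + ξ t ω)) : ℝ)
          = η t * ‖f' (θ t ω)‖ ^ 2 + η t * (inner ℝ (f' (θ t ω)) (ξ t ω) : ℝ) := by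
        rw [real_inner_smul_right, inner_add_right, real_inner_self_eq_norm_sq]
        ring
      have h3 : ‖η t • (f' (θ t ω) + ξ t ω)‖ ^ 2 = η t ^ 2 * ‖f' (θ t ω) + ξ t ω‖ ^ 2 := by
        rw [norm_smul, Real.norm_eq_abs, mul_pow, sq_abs]
      rw [h2, h3] at h1
      rw [hrec t ht ω, hφdef]
      simp only
      linarith
    have hLmeas : AEStronglyMeasurable (fun ω => f θstar - f (θ (t+1) ω)) P :=
      ((stronglyMeasurable_const.sub (hcontf.comp_stronglyMeasurable
        ((hθmeas (t+1)).mono (ℱ.le (t+1)))))).aestronglyMeasurable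
    have hLint' : Integrable (fun ω => f θstar - f (θ (t+1) ω)) P := by
      refine Integrable.mono' (hLint.sub hφint).norm hLmeas
        (Filter.Eventually.of_forall fun ω => ?_)
      rw [Real.norm_eq_abs, abs_of_nonneg (sub_nonneg.2 (hmax _))]
      exact (hdesc ω).trans (le_abs_self _)
    have hanonneg : 0 ≤ a t := by
      rw [ha t]; exact integral_nonneg fun ω => by positivity
    have halg : η t * a t - L' / 2 * η t ^ 2 * (a t + v t)
        = a t ^ 2 / (2 * L' * (a t + v t)) := by
      rw [hηdef t ht]
      have h1 : L' ≠ 0 := hL'.ne'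
      have h2 : a t + v t ≠ 0 := (hav t ht).ne'
      field_simp
      ring
    have hEφ : a t ^ 2 / (2 * L' * (a t + v t)) ≤ ∫ ω, φ ω ∂P := by
      have hval : ∫ ω, φ ω ∂P = η t * a t
          - L' / 2 * η t ^ 2 * ∫ ω, ‖f' (θ t ω) + ξ t ω‖ ^ 2 ∂P := by
        simp only [hφdef]
        rw [integral_sub hT12 hT3, integral_add hT1 hT2, integral_const_mul,
          integral_const_mul, integral_const_mul, hinner0, ← ha t]
        ring
      rw [hval, ← halg]
      have hc : 0 ≤ L' / 2 * η t ^ 2 := by positivity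
      nlinarith [hEsumsq]
    refine ⟨hLint', ?_⟩
    calc ∫ ω, (f θstar - f (θ (t+1) ω)) ∂P
        ≤ ∫ ω, ((f θstar - f (θ t ω)) - φ ω) ∂P :=
          integral_mono hLint' (hLint.sub hφint) hdesc
      _ = ∫ ω, (f θstar - f (θ t ω)) ∂P - ∫ ω, φ ω ∂P := integral_sub hLint hφint
      _ ≤ ∫ ω, (f θstar - f (θ t ω)) ∂P - a t ^ 2 / (2 * L' * (a t + v t)) := by
          linarith [hEφ]
  suffices H : ∀ n, n ≤ T → Integrable (fun ω => f θstar - f (θ n ω)) P ∧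
      ∫ ω, (f θstar - f (θ n ω)) ∂P ≤ ∫ ω, (f θstar - f (θ 0 ω)) ∂P
        - ∑ t ∈ Finset.range n, a t ^ 2 / (2 * L' * (a t + v t)) by
    exact (H T le_rfl).2
  intro n
  induction n with
  | zero => intro _; exact ⟨hθ0int, by simp⟩
  | succ k ih =>
    intro hk
    have hkT : k < T := hk
    obtain ⟨hint, hb⟩ := ih (Nat.le_of_succ_le hk)
    obtain ⟨hint', hstep⟩ := step k hkT hint
    refine ⟨hint', ?_⟩
    rw [Finset.sum_range_succ]
    linarith
end

section
/- (Convergence) Set a_t := E‖∇f(θ_t)‖², assume a_t + v_t > 0 and v_t ≤ V for all t, and choose η_t = a_t / (L' (a_t + v_t)). Then with K := 2 L' · E[f(θ*) − f(θ_0)], the averaged squared gradient norms satisfy (1/T) Σ_{t=0}^{T−1} E‖∇f(θ_t)‖² ≤ K/T + √(K V / T); in particular the left-hand side is O(1/√T). -/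
open MeasureTheory

section Aux

variable {E : Type*} [NormedAddCommGroup E] [InnerProductSpace ℝ E] [CompleteSpace E]

local notation "⟪" x ", " y "⟫" => @inner ℝ _ _ x y

lemma sgd_descent_lower (f : E → ℝ) (f' : E → E) (L : ℝ)
    (hdiff : ∀ x, HasGradientAt f (f' x) x)
    (hlip : ∀ x y, ‖f' x - f' y‖ ≤ L * ‖x - y‖) (x u : E) :
    f x + ⟪f' x, u⟫ - L / 2 * ‖u‖ ^ 2 ≤ f (x + u) := by
  set g : ℝ → ℝ := fun t => f (x + t • u) - t * ⟪f' x, u⟫ + L / 2 * ‖u‖ ^ 2 * t ^ 2 with hg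
  have hderiv : ∀ t : ℝ, HasDerivAt g
      (⟪f' (x + t • u), u⟫ - ⟪f' x, u⟫ + L * ‖u‖ ^ 2 * t) t := by
    intro t
    have hc : HasDerivAt (fun t : ℝ => x + t • u) u t := by
      simpa using ((hasDerivAt_id t).smul_const u).const_add x
    have h1 : HasDerivAt (fun t : ℝ => f (x + t • u)) ⟪f' (x + t • u), u⟫ t := by
      have := ((hdiff (x + t • u)).hasFDerivAt).comp_hasDerivAt t hc
      simpa [InnerProductSpace.toDual_apply_apply, Function.comp_def] using this
    have h2 : HasDerivAt (fun t : ℝ => t * ⟪f' x, u⟫) ⟪f' x, u⟫ t := by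
      simpa using (hasDerivAt_id t).mul_const (⟪f' x, u⟫)
    have h3 : HasDerivAt (fun t : ℝ => L / 2 * ‖u‖ ^ 2 * t ^ 2) (L * ‖u‖ ^ 2 * t) t := by
      have := (hasDerivAt_pow 2 t).const_mul (L / 2 * ‖u‖ ^ 2)
      exact this.congr_deriv (by norm_num; ring)
    exact (h1.sub h2).add h3
  have hmono : MonotoneOn g (Set.Icc (0:ℝ) 1) := by
    apply monotoneOn_of_deriv_nonneg (convex_Icc 0 1)
    · exact fun t _ => ((hderiv t).differentiableAt.continuousAt).continuousWithinAt
    · exact fun t _ => ((hderiv t).differentiableAt).differentiableWithinAt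
    · intro t ht
      rw [interior_Icc] at ht
      rw [(hderiv t).deriv]
      have hb : ‖f' x - f' (x + t • u)‖ ≤ L * (t * ‖u‖) := by
        have := hlip x (x + t • u)
        simpa [norm_smul, abs_of_nonneg ht.1.le] using this
      have : -(L * (t * ‖u‖) * ‖u‖) ≤ ⟪f' (x + t • u), u⟫ - ⟪f' x, u⟫ := by
        have h4 : ⟪f' x - f' (x + t • u), u⟫ ≤ ‖f' x - f' (x + t • u)‖ * ‖u‖ :=
          real_inner_le_norm _ _
        have h5 : ‖f' x - f' (x + t • u)‖ * ‖u‖ ≤ L * (t * ‖u‖) * ‖u‖ :=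
          mul_le_mul_of_nonneg_right hb (norm_nonneg _)
        have := h4.trans h5
        rw [inner_sub_left] at this
        linarith
      nlinarith [sq_nonneg ‖u‖, norm_nonneg u]
  have h01 := hmono (Set.left_mem_Icc.2 zero_le_one) (Set.right_mem_Icc.2 zero_le_one) zero_le_one
  simp only [hg, zero_smul, add_zero, one_smul, zero_pow, one_pow, mul_zero, mul_one, zero_mul,
    sub_zero] at h01
  linarith

lemma sgd_descent_abs (f : E → ℝ) (f' : E → E) (L : ℝ)
    (hdiff : ∀ x, HasGradientAt f (f' x) x)
    (hlip : ∀ x y, ‖f' x - f' y‖ ≤ L * ‖x - y‖) (x u : E) :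
    |f (x + u) - f x - ⟪f' x, u⟫| ≤ L / 2 * ‖u‖ ^ 2 := by
  have h1 := sgd_descent_lower f f' L hdiff hlip x u
  have hdiff' : ∀ y, HasGradientAt (fun z => -f z) (-f' y) y := by
    intro y
    rw [hasGradientAt_iff_hasFDerivAt]
    have := ((hdiff y).hasFDerivAt).neg
    simp only [map_neg]
    exact this
  have hlip' : ∀ y z, ‖(-f' y) - (-f' z)‖ ≤ L * ‖y - z‖ := by
    intro y z
    rw [show -f' y - -f' z = -(f' y - f' z) by abel, norm_neg]
    exact hlip y z
  have h2 := sgd_descent_lower (fun z => -f z) (fun z => -f' z) L hdiff' hlip' x u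
  simp only [inner_neg_left] at h2
  rw [abs_le]
  constructor <;> linarith

lemma condexp_clm_comm {α : Type*} {E' F : Type*}
    [NormedAddCommGroup E'] [NormedSpace ℝ E'] [CompleteSpace E']
    [NormedAddCommGroup F] [NormedSpace ℝ F] [CompleteSpace F]
    {m m0 : MeasurableSpace α} (hm : m ≤ m0) {μ : Measure α} [IsFiniteMeasure μ]
    (L : E' →L[ℝ] F) {ξ : α → E'} (hξ : Integrable ξ μ) :
    μ[fun ω => L (ξ ω)|m] =ᵐ[μ] fun ω => L ((μ[ξ|m]) ω) := by
  haveI : SigmaFinite (μ.trim hm) := sigmaFiniteTrim_mono hm le_rfl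
  refine (ae_eq_condExp_of_forall_setIntegral_eq hm (L.integrable_comp hξ)
    (fun s _ _ => (L.integrable_comp integrable_condExp).integrableOn)
    (fun s hs hμs => ?_) ?_).symm
  · rw [L.integral_comp_comm integrable_condExp.integrableOn,
      setIntegral_condExp hm hξ hs, L.integral_comp_comm hξ.integrableOn]
  · exact StronglyMeasurable.aestronglyMeasurable
      (L.continuous.comp_stronglyMeasurable stronglyMeasurable_condExp)

lemma sgd_mul_L2_integrable {Ω : Type*} {m0 : MeasurableSpace Ω} {P : Measure Ω}
    {g h : Ω → ℝ} (hg : MemLp g 2 P) (hh : MemLp h 2 P) :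
    Integrable (fun ω => g ω * h ω) P := by
  have := hh.smul (φ := g) hg (r := 1)
  rw [memLp_one_iff_integrable] at this
  exact this

lemma sgd_cross_term_zero {d : ℕ} {Ω : Type*} {m m0 : MeasurableSpace Ω} {P : Measure Ω}
    [IsProbabilityMeasure P] (hm : m ≤ m0)
    {g ξ : Ω → EuclideanSpace ℝ (Fin d)}
    (hgm : StronglyMeasurable[m] g) (hgL2 : MemLp g 2 P) (hξL2 : MemLp ξ 2 P)
    (hξmean : P[ξ|m] =ᵐ[P] 0) :
    ∫ ω, ⟪g ω, ξ ω⟫ ∂P = 0 := by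
  haveI : SigmaFinite (P.trim hm) := sigmaFiniteTrim_mono hm le_rfl
  have hinner : ∀ ω, ⟪g ω, ξ ω⟫ = ∑ i : Fin d, g ω i * ξ ω i := by
    intro ω
    simp [PiLp.inner_apply, RCLike.inner_apply, conj_trivial]
    exact Finset.sum_congr rfl fun _ _ => mul_comm _ _
  have hcoord : ∀ i : Fin d, ∫ ω, g ω i * ξ ω i ∂P = 0 := by
    intro i
    set gi : Ω → ℝ := fun ω => g ω i with hgidef
    set ξi : Ω → ℝ := fun ω => ξ ω i with hξidef
    have hgim : StronglyMeasurable[m] gi :=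
      (EuclideanSpace.proj i).continuous.comp_stronglyMeasurable hgm
    have hgiL2 : MemLp gi 2 P := by
      simpa [Function.comp_def] using (EuclideanSpace.proj (𝕜 := ℝ) i).comp_memLp' hgL2
    have hξiL2 : MemLp ξi 2 P := by
      simpa [Function.comp_def] using (EuclideanSpace.proj (𝕜 := ℝ) i).comp_memLp' hξL2
    have hξi0 : P[ξi|m] =ᵐ[P] 0 := by
      have h1 := condexp_clm_comm hm (EuclideanSpace.proj (𝕜 := ℝ) i)
        (hξL2.integrable one_le_two)
      have h2 : (fun ω => EuclideanSpace.proj (𝕜 := ℝ) i ((P[ξ|m]) ω)) =ᵐ[P] 0 := by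
        filter_upwards [hξmean] with ω hω
        simp [hω]
      have h3 := h1.trans h2
      simpa using h3
    have hint : Integrable (fun ω => gi ω * ξi ω) P := sgd_mul_L2_integrable hgiL2 hξiL2
    have hpull := condExp_mul_of_stronglyMeasurable_left hgim
      (by exact hint) (hξiL2.integrable one_le_two)
    calc ∫ ω, gi ω * ξi ω ∂P = ∫ ω, (P[gi * ξi|m]) ω ∂P := (integral_condExp hm).symm
      _ = 0 := by
        rw [integral_congr_ae (hpull.trans ?_), integral_zero]
        filter_upwards [hξi0] with ω hω
        simp [hω]
  rw [integral_congr_ae (Filter.Eventually.of_forall hinner)]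
  rw [integral_finset_sum]
  · simp [hcoord]
  · exact fun i _ => sgd_mul_L2_integrable
      (by simpa [Function.comp_def] using (EuclideanSpace.proj (𝕜 := ℝ) i).comp_memLp' hgL2)
      (by simpa [Function.comp_def] using (EuclideanSpace.proj (𝕜 := ℝ) i).comp_memLp' hξL2)

end Aux

set_option maxHeartbeats 1000000

local notation "⟪" x ", " y "⟫" => @inner ℝ _ _ x y

/-- (Convergence.) In the stochastic gradient ascent setting
with `a_t = E‖∇f(θ_t)‖²`, `a_t + v_t > 0`, `v_t ≤ V`, and learning rates
`η_t = a_t / (L'(a_t + v_t))`, setting `K = 2L'·E[f(θ*) − f(θ_0)]`, one has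
`(1/T) Σ_{t<T} E‖∇f(θ_t)‖² ≤ K/T + √(KV/T)`; in particular the averaged
squared gradient norms are `O(1/√T)`. -/
theorem sgd_convergence_optimal_lr
    {d : ℕ} (hd : 1 ≤ d)
    {Ω : Type*} {m0 : MeasurableSpace Ω} (P : Measure Ω) [IsProbabilityMeasure P]
    (ℱ : Filtration ℕ m0)
    (f : EuclideanSpace ℝ (Fin d) → ℝ)
    (f' : EuclideanSpace ℝ (Fin d) → EuclideanSpace ℝ (Fin d))
    (L' : ℝ) (hL' : 0 < L')
    (hdiff : ∀ x, HasGradientAt f (f' x) x)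
    (hlip : ∀ x y, ‖f' x - f' y‖ ≤ L' * ‖x - y‖)
    (θstar : EuclideanSpace ℝ (Fin d)) (hmax : ∀ x, f x ≤ f θstar)
    (T : ℕ) (η v : ℕ → ℝ) (hv : ∀ t < T, 0 ≤ v t)
    (θ : ℕ → Ω → EuclideanSpace ℝ (Fin d))
    (ξ : ℕ → Ω → EuclideanSpace ℝ (Fin d))
    (hθmeas : ∀ t, StronglyMeasurable[ℱ t] (θ t))
    (hθ0int : Integrable (fun ω => f θstar - f (θ 0 ω)) P)
    (hrec : ∀ t < T, ∀ ω, θ (t + 1) ω = θ t ω + η t • (f' (θ t ω) + ξ t ω))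
    (hξmeas : ∀ t < T, StronglyMeasurable[ℱ (t + 1)] (ξ t))
    (hξL2 : ∀ t < T, MemLp (ξ t) 2 P)
    (hξmean : ∀ t < T, P[fun ω => ξ t ω|ℱ t] =ᵐ[P] 0)
    (hξvar : ∀ t < T, ∀ᵐ ω ∂P, (P[fun ω => ‖ξ t ω‖ ^ 2|ℱ t]) ω ≤ v t)
    (hgradint : ∀ t, Integrable (fun ω => ‖f' (θ t ω)‖ ^ 2) P)
    (a : ℕ → ℝ) (ha : ∀ t, a t = ∫ ω, ‖f' (θ t ω)‖ ^ 2 ∂P)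
    (hav : ∀ t < T, 0 < a t + v t)
    (hηdef : ∀ t < T, η t = a t / (L' * (a t + v t)))
    (hT : 1 ≤ T) (V : ℝ) (hV : 0 ≤ V) (hvV : ∀ t < T, v t ≤ V)
    (K : ℝ) (hK : K = 2 * L' * ∫ ω, (f θstar - f (θ 0 ω)) ∂P) :
    (T : ℝ)⁻¹ * ∑ t ∈ Finset.range T, a t ≤ K / T + Real.sqrt (K * V / T) := by
  have hL'ne : L' ≠ 0 := ne_of_gt hL'
  have hf'lip : LipschitzWith (Real.toNNReal L') f' := by
    apply LipschitzWith.of_dist_le_mul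
    intro x y
    rw [dist_eq_norm, dist_eq_norm, Real.coe_toNNReal _ hL'.le]
    exact hlip x y
  have hf'c : Continuous f' := hf'lip.continuous
  have hfc : Continuous f :=
    continuous_iff_continuousAt.mpr fun x => (hdiff x).differentiableAt.continuousAt
  have hθsm : ∀ t, StronglyMeasurable (θ t) := fun t => (hθmeas t).mono (ℱ.le t)
  have hgsm : ∀ t, StronglyMeasurable (fun ω => f' (θ t ω)) := fun t =>
    hf'c.comp_stronglyMeasurable (hθsm t)
  have hgL2 : ∀ t, MemLp (fun ω => f' (θ t ω)) 2 P := fun t =>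
    (memLp_two_iff_integrable_sq_norm (hgsm t).aestronglyMeasurable).mpr (hgradint t)
  have haT : ∀ t, 0 ≤ a t := fun t => by
    rw [ha t]; exact integral_nonneg fun ω => sq_nonneg _
  -- one-step estimate
  have hstep : ∀ t, t < T → Integrable (fun ω => f (θ (t+1) ω) - f (θ t ω)) P ∧
      a t ^ 2 / (2 * L' * (a t + v t)) ≤ ∫ ω, (f (θ (t+1) ω) - f (θ t ω)) ∂P := by
    intro t ht
    haveI : SigmaFinite (P.trim (ℱ.le t)) := sigmaFiniteTrim_mono _ le_rfl
    have hξ2 := hξL2 t ht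
    have hξsm : StronglyMeasurable (ξ t) := (hξmeas t ht).mono (ℱ.le (t+1))
    have hcross : ∫ ω, ⟪f' (θ t ω), ξ t ω⟫ ∂P = 0 :=
      sgd_cross_term_zero (ℱ.le t) (hf'c.comp_stronglyMeasurable (hθmeas t))
        (hgL2 t) hξ2 (hξmean t ht)
    have hξnsq : Integrable (fun ω => ‖ξ t ω‖ ^ 2) P :=
      (memLp_two_iff_integrable_sq_norm hξ2.aestronglyMeasurable).mp hξ2
    have hξvar' : ∫ ω, ‖ξ t ω‖ ^ 2 ∂P ≤ v t := by
      calc ∫ ω, ‖ξ t ω‖ ^ 2 ∂P = ∫ ω, (P[fun ω => ‖ξ t ω‖ ^ 2|ℱ t]) ω ∂P :=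
            (integral_condExp (ℱ.le t)).symm
        _ ≤ ∫ _ω, v t ∂P :=
            integral_mono_ae integrable_condExp (integrable_const _) (hξvar t ht)
        _ = v t := by simp
    -- integrability of the inner product term
    have hiξ : Integrable (fun ω => ⟪f' (θ t ω), ξ t ω⟫) P := by
      refine Integrable.mono' (sgd_mul_L2_integrable (hgL2 t).norm hξ2.norm)
        ?_ (Filter.Eventually.of_forall fun ω => ?_)
      · exact ((hgsm t).inner hξsm).aestronglyMeasurable
      · simpa using abs_real_inner_le_norm (f' (θ t ω)) (ξ t ω)
    have hsum2 : MemLp (fun ω => f' (θ t ω) + ξ t ω) 2 P := (hgL2 t).add hξ2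
    have hψint : Integrable (fun ω => ‖f' (θ t ω) + ξ t ω‖ ^ 2) P :=
      (memLp_two_iff_integrable_sq_norm hsum2.aestronglyMeasurable).mp hsum2
    have hi2 : Integrable (fun ω => 2 * ⟪f' (θ t ω), ξ t ω⟫) P := hiξ.const_mul 2
    have hi12 : Integrable (fun ω => ‖f' (θ t ω)‖ ^ 2 + 2 * ⟪f' (θ t ω), ξ t ω⟫) P :=
      (hgradint t).add hi2
    have hψval : ∫ ω, ‖f' (θ t ω) + ξ t ω‖ ^ 2 ∂P ≤ a t + v t := by
      have hexp : ∀ ω, ‖f' (θ t ω) + ξ t ω‖ ^ 2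
          = (‖f' (θ t ω)‖ ^ 2 + 2 * ⟪f' (θ t ω), ξ t ω⟫) + ‖ξ t ω‖ ^ 2 := fun ω =>
        norm_add_sq_real _ _
      rw [integral_congr_ae (Filter.Eventually.of_forall hexp), integral_add hi12 hξnsq,
        integral_add (hgradint t) hi2, integral_const_mul, hcross, ← ha t]
      linarith
    -- pointwise bounds
    have hpt : ∀ ω, |f (θ (t+1) ω) - f (θ t ω)
        - η t * (‖f' (θ t ω)‖ ^ 2 + ⟪f' (θ t ω), ξ t ω⟫)|
        ≤ L' / 2 * (η t ^ 2 * ‖f' (θ t ω) + ξ t ω‖ ^ 2) := by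
      intro ω
      have h1 := sgd_descent_abs f f' L' hdiff hlip (θ t ω) (η t • (f' (θ t ω) + ξ t ω))
      rw [← hrec t ht ω] at h1
      have h2 : ⟪f' (θ t ω), η t • (f' (θ t ω) + ξ t ω)⟫
          = η t * (‖f' (θ t ω)‖ ^ 2 + ⟪f' (θ t ω), ξ t ω⟫) := by
        rw [real_inner_smul_right, inner_add_right, real_inner_self_eq_norm_sq]
      have h3 : ‖η t • (f' (θ t ω) + ξ t ω)‖ ^ 2
          = η t ^ 2 * ‖f' (θ t ω) + ξ t ω‖ ^ 2 := by
        rw [norm_smul, mul_pow, Real.norm_eq_abs, sq_abs]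
      rw [h2, h3] at h1
      exact h1
    have hφint : Integrable (fun ω => η t * (‖f' (θ t ω)‖ ^ 2 + ⟪f' (θ t ω), ξ t ω⟫)) P :=
      ((hgradint t).add hiξ).const_mul (η t)
    have hψc : Integrable (fun ω => L' / 2 * (η t ^ 2 * ‖f' (θ t ω) + ξ t ω‖ ^ 2)) P :=
      (hψint.const_mul _).const_mul _
    have hDm : AEStronglyMeasurable (fun ω => f (θ (t+1) ω) - f (θ t ω)) P :=
      ((hfc.comp_stronglyMeasurable (hθsm (t+1))).sub
        (hfc.comp_stronglyMeasurable (hθsm t))).aestronglyMeasurable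
    have hDint : Integrable (fun ω => f (θ (t+1) ω) - f (θ t ω)) P := by
      refine Integrable.mono' (g := fun ω => |η t * (‖f' (θ t ω)‖ ^ 2 + ⟪f' (θ t ω), ξ t ω⟫)|
        + L' / 2 * (η t ^ 2 * ‖f' (θ t ω) + ξ t ω‖ ^ 2))
        (hφint.abs.add hψc) hDm
        (Filter.Eventually.of_forall fun ω => ?_)
      set D := f (θ (t+1) ω) - f (θ t ω) with hD
      set φω := η t * (‖f' (θ t ω)‖ ^ 2 + ⟪f' (θ t ω), ξ t ω⟫) with hφω
      have h6 : |D| ≤ |D - φω| + |φω| := by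
        have := abs_add_le (D - φω) φω
        simpa using this
      have h7 := hpt ω
      simp only [Real.norm_eq_abs]
      rw [← hφω] at h7
      show |D| ≤ |φω| + L' / 2 * (η t ^ 2 * ‖f' (θ t ω) + ξ t ω‖ ^ 2)
      linarith
    refine ⟨hDint, ?_⟩
    -- lower bound the expectation
    have hlow : ∫ ω, (f (θ (t+1) ω) - f (θ t ω)) ∂P
        ≥ η t * (a t + 0) - L' / 2 * (η t ^ 2 * ∫ ω, ‖f' (θ t ω) + ξ t ω‖ ^ 2 ∂P) := by
      have hlhsint : Integrable (fun ω => η t * (‖f' (θ t ω)‖ ^ 2 + ⟪f' (θ t ω), ξ t ω⟫)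
          - L' / 2 * (η t ^ 2 * ‖f' (θ t ω) + ξ t ω‖ ^ 2)) P := hφint.sub hψc
      have hptl : ∀ ω, η t * (‖f' (θ t ω)‖ ^ 2 + ⟪f' (θ t ω), ξ t ω⟫)
          - L' / 2 * (η t ^ 2 * ‖f' (θ t ω) + ξ t ω‖ ^ 2)
          ≤ f (θ (t+1) ω) - f (θ t ω) := fun ω => by
        have := hpt ω; rw [abs_le] at this; linarith [this.1]
      have hmono' := integral_mono hlhsint hDint hptl
      rw [integral_sub hφint hψc, integral_const_mul,
        integral_add (hgradint t) hiξ, hcross, integral_const_mul, integral_const_mul,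
        ← ha t] at hmono'
      linarith
    have hη : η t = a t / (L' * (a t + v t)) := hηdef t ht
    have hηnn : 0 ≤ η t := by
      rw [hη]
      exact div_nonneg (haT t) (mul_nonneg hL'.le (hav t ht).le)
    have hcoef : 0 ≤ L' / 2 * η t ^ 2 := by positivity
    have hfinal : η t * (a t + 0) - L' / 2 * (η t ^ 2 * ∫ ω, ‖f' (θ t ω) + ξ t ω‖ ^ 2 ∂P)
        ≥ a t ^ 2 / (2 * L' * (a t + v t)) := by
      have h6 : L' / 2 * (η t ^ 2 * ∫ ω, ‖f' (θ t ω) + ξ t ω‖ ^ 2 ∂P)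
          ≤ L' / 2 * (η t ^ 2 * (a t + v t)) := by
        have := mul_le_mul_of_nonneg_left hψval (sq_nonneg (η t))
        nlinarith
      have h7 : η t * (a t + 0) - L' / 2 * (η t ^ 2 * (a t + v t))
          = a t ^ 2 / (2 * L' * (a t + v t)) := by
        have hne : a t + v t ≠ 0 := ne_of_gt (hav t ht)
        rw [hη]
        field_simp
        ring
      linarith
    linarith
  -- telescoping
  have htel : ∀ n, n ≤ T → Integrable (fun ω => f θstar - f (θ n ω)) P ∧
      ∫ ω, (f θstar - f (θ n ω)) ∂P + ∑ t ∈ Finset.range n, a t ^ 2 / (2 * L' * (a t + v t))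
        ≤ ∫ ω, (f θstar - f (θ 0 ω)) ∂P := by
    intro n
    induction n with
    | zero => exact fun _ => ⟨hθ0int, by simp⟩
    | succ n ih =>
      intro hn
      have hn' : n < T := hn
      obtain ⟨ihint, ihle⟩ := ih hn'.le
      obtain ⟨hDint, hDge⟩ := hstep n hn'
      have heq : (fun ω => f θstar - f (θ (n+1) ω)) =
          fun ω => (f θstar - f (θ n ω)) - (f (θ (n+1) ω) - f (θ n ω)) := by
        funext ω; ring
      refine ⟨by rw [heq]; exact ihint.sub hDint, ?_⟩
      have hsub : ∫ ω, (f θstar - f (θ (n+1) ω)) ∂P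
          = ∫ ω, (f θstar - f (θ n ω)) ∂P - ∫ ω, (f (θ (n+1) ω) - f (θ n ω)) ∂P := by
        rw [heq, integral_sub ihint hDint]
      rw [hsub, Finset.sum_range_succ]
      linarith
  -- sum bound
  have hI0 : ∫ ω, (f θstar - f (θ 0 ω)) ∂P = K / (2 * L') := by
    rw [hK]; field_simp
  have hsumK : ∑ t ∈ Finset.range T, a t ^ 2 / (a t + v t) ≤ K := by
    obtain ⟨hTint, hTle⟩ := htel T le_rfl
    have h0 : 0 ≤ ∫ ω, (f θstar - f (θ T ω)) ∂P :=
      integral_nonneg fun ω => sub_nonneg.2 (hmax (θ T ω))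
    have hrw : ∀ t, a t ^ 2 / (2 * L' * (a t + v t)) = (a t ^ 2 / (a t + v t)) / (2 * L') := by
      intro t; rw [div_div, mul_comm]
    rw [Finset.sum_congr rfl fun t _ => hrw t, ← Finset.sum_div, hI0] at hTle
    have h2L : (0:ℝ) < 2 * L' := by linarith
    have h8 : (∑ t ∈ Finset.range T, a t ^ 2 / (a t + v t)) / (2 * L') ≤ K / (2 * L') := by
      linarith
    have h9 := mul_le_mul_of_nonneg_right h8 h2L.le
    rw [div_mul_cancel₀ _ (ne_of_gt h2L), div_mul_cancel₀ _ (ne_of_gt h2L)] at h9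
    exact h9
  have hK0 : 0 ≤ K := by
    rw [hK]
    exact mul_nonneg (by linarith) (integral_nonneg fun ω => sub_nonneg.2 (hmax (θ 0 ω)))
  -- Cauchy-Schwarz
  set S := ∑ t ∈ Finset.range T, a t with hS
  have hS0 : 0 ≤ S := Finset.sum_nonneg fun t _ => haT t
  have hCS : S ^ 2 ≤ (∑ t ∈ Finset.range T, a t ^ 2 / (a t + v t))
      * ∑ t ∈ Finset.range T, (a t + v t) := by
    apply Finset.sum_sq_le_sum_mul_sum_of_sq_eq_mul
    · exact fun t _ => div_nonneg (sq_nonneg _) (by have := hav t (Finset.mem_range.mp ‹_›); linarith)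
    · exact fun t ht' => (hav t (Finset.mem_range.mp ht')).le
    · intro t ht'
      rw [div_mul_cancel₀ _ (ne_of_gt (hav t (Finset.mem_range.mp ht')))]
  have hvsum : ∑ t ∈ Finset.range T, (a t + v t) ≤ S + T * V := by
    rw [Finset.sum_add_distrib, ← hS]
    have : ∑ t ∈ Finset.range T, v t ≤ ∑ _t ∈ Finset.range T, V :=
      Finset.sum_le_sum fun t ht' => hvV t (Finset.mem_range.mp ht')
    simp only [Finset.sum_const, Finset.card_range, nsmul_eq_mul] at this
    linarith
  have hquad : S ^ 2 ≤ K * S + K * (T * V) := by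
    have hb0 : 0 ≤ ∑ t ∈ Finset.range T, a t ^ 2 / (a t + v t) :=
      Finset.sum_nonneg fun t ht' =>
        div_nonneg (sq_nonneg _) (hav t (Finset.mem_range.mp ht')).le
    have hsv0 : 0 ≤ ∑ t ∈ Finset.range T, (a t + v t) :=
      Finset.sum_nonneg fun t ht' => (hav t (Finset.mem_range.mp ht')).le
    calc S ^ 2 ≤ (∑ t ∈ Finset.range T, a t ^ 2 / (a t + v t))
        * ∑ t ∈ Finset.range T, (a t + v t) := hCS
      _ ≤ K * (S + T * V) := mul_le_mul hsumK hvsum hsv0 hK0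
      _ = K * S + K * (T * V) := by ring
  have hT0 : (0:ℝ) < T := by exact_mod_cast hT
  have hTV0 : (0:ℝ) ≤ (T:ℝ) * V := mul_nonneg hT0.le hV
  set s := Real.sqrt (K * ((T:ℝ) * V)) with hsdef
  have hs0 : 0 ≤ s := Real.sqrt_nonneg _
  have hs2 : s ^ 2 = K * ((T:ℝ) * V) := Real.sq_sqrt (mul_nonneg hK0 hTV0)
  have hSb : S ≤ K + s := by nlinarith [mul_nonneg hK0 hs0]
  have hTne : (T:ℝ) ≠ 0 := ne_of_gt hT0
  have haux : K * ((T:ℝ) * V) = (K * V / (T:ℝ)) * (T:ℝ) ^ 2 := by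
    field_simp
  have hsq : s = Real.sqrt (K * V / T) * T := by
    rw [hsdef, haux,
      Real.sqrt_mul (div_nonneg (mul_nonneg hK0 hV) hT0.le), Real.sqrt_sq hT0.le]
  calc (T:ℝ)⁻¹ * S ≤ (T:ℝ)⁻¹ * (K + s) := by
        apply mul_le_mul_of_nonneg_left hSb (by positivity)
    _ = K / T + Real.sqrt (K * V / T) := by
        rw [hsq]; field_simp
end

section
/- (Optimal Sampling Strategy) Define S := Σ_{t=0}^{T−1} √h_t, R := Σ_{t=0}^{T−1} h_t / a_t, and N_t* := ((C + R)/S) · √h_t − h_t / a_t, and assume N_t* > 0 for every t. Then Σ_{t=0}^{T−1} N_t* = C, and for all positive reals N_0, …, N_{T−1} with Σ_{t=0}^{T−1} N_t ≤ C, one has Σ_{t=0}^{T−1} h_t / (N_t + h_t / a_t) ≥ S² / (C + R), with equality when N_t = N_t* for all t. -/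
/-- (Optimal Sampling Strategy.) With `S = Σ_t √h_t`,
`R = Σ_t h_t/a_t` and `N*_t = ((C+R)/S)·√h_t − h_t/a_t` all positive, the
budget is saturated, `Σ_t N*_t = C`; every feasible allocation
`N_t > 0` with `Σ_t N_t ≤ C` satisfies
`Σ_t h_t/(N_t + h_t/a_t) ≥ S²/(C+R)`, with equality at `N = N*`. -/
theorem optimal_sampling_strategy
    (T : ℕ) (hT : 1 ≤ T)
    (h a : Fin T → ℝ) (hh : ∀ t, 0 < h t) (ha : ∀ t, 0 < a t)
    (C : ℝ) (hC : 0 < C)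
    (S R : ℝ)
    (hS : S = ∑ t, Real.sqrt (h t))
    (hR : R = ∑ t, h t / a t)
    (Nstar : Fin T → ℝ)
    (hNstar : ∀ t, Nstar t = (C + R) / S * Real.sqrt (h t) - h t / a t)
    (hNpos : ∀ t, 0 < Nstar t) :
    (∑ t, Nstar t = C) ∧
    (∀ N : Fin T → ℝ, (∀ t, 0 < N t) → (∑ t, N t ≤ C) →
      S ^ 2 / (C + R) ≤ ∑ t, h t / (N t + h t / a t)) ∧
    (∑ t, h t / (Nstar t + h t / a t) = S ^ 2 / (C + R)) := by
  have hTne : (Finset.univ : Finset (Fin T)).Nonempty := by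
    haveI : NeZero T := ⟨by omega⟩
    exact Finset.univ_nonempty
  have hSpos : 0 < S := by
    rw [hS]
    exact Finset.sum_pos (fun t _ => Real.sqrt_pos.2 (hh t)) hTne
  have hRpos : 0 < R := by
    rw [hR]
    exact Finset.sum_pos (fun t _ => div_pos (hh t) (ha t)) hTne
  have hCR : 0 < C + R := by linarith
  have hsum : ∑ t, Nstar t = C := by
    have : ∑ t, Nstar t = (C + R) / S * (∑ t, Real.sqrt (h t)) - ∑ t, h t / a t := by
      rw [Finset.mul_sum, ← Finset.sum_sub_distrib]
      exact Finset.sum_congr rfl fun t _ => by rw [hNstar t]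
    rw [this, ← hS, ← hR]
    field_simp
    ring
  refine ⟨hsum, ?_, ?_⟩
  · intro N hNp hNle
    set d : Fin T → ℝ := fun t => N t + h t / a t with hd
    have hdpos : ∀ t, 0 < d t := fun t => add_pos (hNp t) (div_pos (hh t) (ha t))
    have hcs : S ^ 2 ≤ (∑ t, h t / d t) * ∑ t, d t := by
      have cs := Finset.sum_mul_sq_le_sq_mul_sq Finset.univ
        (fun t => Real.sqrt (h t) / Real.sqrt (d t)) (fun t => Real.sqrt (d t))
      have e1 : ∀ t : Fin T, Real.sqrt (h t) / Real.sqrt (d t) * Real.sqrt (d t)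
          = Real.sqrt (h t) := fun t =>
        div_mul_cancel₀ _ (ne_of_gt (Real.sqrt_pos.2 (hdpos t)))
      have e2 : ∀ t : Fin T, (Real.sqrt (h t) / Real.sqrt (d t)) ^ 2 = h t / d t := by
        intro t
        rw [div_pow, Real.sq_sqrt (hh t).le, Real.sq_sqrt (hdpos t).le]
      have e3 : ∀ t : Fin T, Real.sqrt (d t) ^ 2 = d t := fun t =>
        Real.sq_sqrt (hdpos t).le
      simp only [e1, e2, e3] at cs
      rwa [← hS] at cs
    have hdsum : ∑ t, d t ≤ C + R := by
      have : ∑ t, d t = (∑ t, N t) + ∑ t, h t / a t := Finset.sum_add_distrib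
      rw [this, ← hR]; linarith
    have hpos : 0 ≤ ∑ t, h t / d t :=
      Finset.sum_nonneg fun t _ => (div_pos (hh t) (hdpos t)).le
    rw [div_le_iff₀ hCR]
    calc S ^ 2 ≤ (∑ t, h t / d t) * ∑ t, d t := hcs
      _ ≤ (∑ t, h t / d t) * (C + R) := mul_le_mul_of_nonneg_left hdsum hpos
  · have heq : ∀ t, h t / (Nstar t + h t / a t) = S / (C + R) * Real.sqrt (h t) := by
      intro t
      have h1 : Nstar t + h t / a t = (C + R) / S * Real.sqrt (h t) := by
        rw [hNstar t]; ring
      rw [h1]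
      have hst : Real.sqrt (h t) > 0 := Real.sqrt_pos.2 (hh t)
      have : h t = Real.sqrt (h t) * Real.sqrt (h t) :=
        (Real.mul_self_sqrt (hh t).le).symm
      rw [this]
      field_simp
      rw [Real.sqrt_sq hst.le]
    rw [Finset.sum_congr rfl fun t _ => heq t, ← Finset.mul_sum, ← hS]
    field_simp
end
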